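/- Let R be a unital associative algebra over ℚ, let P ∈ R be invertible and let M ∈ R satisfy PM − MP = 1. Writing B_{mp} = M^m P^p for m ≥ 0 and p ∈ ℤ, the following identities hold for all integers p, p′: [B_{0p}, B_{1p′}] = p B_{0,p+p′−1}; [B_{1p}, B_{1p′}] = (p − p′) B_{1,p+p′−1}; [B_{0p}, B_{2p′}] = p(p−1) B_{0,p+p′−2} + 2p B_{1,p+p′−1}. More generally, for all m, m′ ≥ 0 and p, p′ ∈ ℤ, the commutator [B_{mp}, B_{m′p′}] is an integer linear combination of the operators B_{nq} with 0 ≤ n < m + m′ and |q − (p + p′)| ≤ max(m, m′). -/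

import Mathlib

/-!
STATEMENT 15: In a unital associative ℚ-algebra R with an invertible element P
and an element M with PM − MP = 1, setting B_{mp} = M^m P^p one has
[B_{0p}, B_{1p'}] = p B_{0,p+p'−1}, [B_{1p}, B_{1p'}] = (p−p') B_{1,p+p'−1},
[B_{0p}, B_{2p'}] = p(p−1) B_{0,p+p'−2} + 2p B_{1,p+p'−1}, and in general
[B_{mp}, B_{m'p'}] is an integer linear combination of the B_{nq} with
0 ≤ n < m+m' and |q − (p+p')| ≤ max(m,m').
-/

def ffac (p : ℤ) : ℕ → ℤ
  | 0 => 1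
  | k + 1 => ffac p k * (p - k)

section aux
variable {R : Type*} [Ring R] (P : Rˣ) (M : R)

lemma aux_h1 (hPM : (P : R) * M - M * (P : R) = 1) :
    ∀ p : ℤ, ((P ^ p : Rˣ) : R) * M = M * ((P ^ p : Rˣ) : R) + p • ((P ^ (p - 1) : Rˣ) : R) := by
  have hPPmul : ∀ a b : ℤ, ((P ^ a : Rˣ) : R) * ((P ^ b : Rˣ) : R) = ((P ^ (a + b) : Rˣ) : R) := by
    intro a b; rw [← Units.val_mul, ← zpow_add]
  have congrP : ∀ {a b : ℤ}, a = b → ((P ^ a : Rˣ) : R) = ((P ^ b : Rˣ) : R) := by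
    intro a b h; rw [h]
  have hp1 : ((P ^ (1:ℤ) : Rˣ) : R) = (P : R) := by norm_num
  have hpm1 : ((P ^ (-1:ℤ) : Rˣ) : R) = ((P⁻¹ : Rˣ) : R) := by rw [zpow_neg_one]
  have hstepup : ∀ a : ℤ, ((P ^ a : Rˣ) : R) * (P : R) = ((P ^ (a + 1) : Rˣ) : R) := by
    intro a; rw [← hp1, hPPmul]
  have hstepdown : ∀ a : ℤ, ((P ^ a : Rˣ) : R) * ((P⁻¹ : Rˣ) : R) = ((P ^ (a - 1) : Rˣ) : R) := by
    intro a; rw [← hpm1, hPPmul, congrP (show a + -1 = a - 1 by ring)]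
  have hMP : M * (P : R) = (P : R) * M - 1 := by rw [← hPM]; abel
  have hup : (P : R) * M = M * (P : R) + 1 := by rw [hMP]; abel
  have hdown : ((P⁻¹ : Rˣ) : R) * M
      = M * ((P⁻¹ : Rˣ) : R) - ((P⁻¹ : Rˣ) : R) * ((P⁻¹ : Rˣ) : R) := by
    have h : ((P⁻¹ : Rˣ) : R) * (M * (P : R)) * ((P⁻¹ : Rˣ) : R)
        = ((P⁻¹ : Rˣ) : R) * ((P : R) * M - 1) * ((P⁻¹ : Rˣ) : R) := by rw [hMP]
    calc ((P⁻¹ : Rˣ) : R) * M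
        = ((P⁻¹ : Rˣ) : R) * (M * (P : R)) * ((P⁻¹ : Rˣ) : R) := by
          rw [mul_assoc, mul_assoc, Units.mul_inv, mul_one]
      _ = ((P⁻¹ : Rˣ) : R) * ((P : R) * M - 1) * ((P⁻¹ : Rˣ) : R) := h
      _ = M * ((P⁻¹ : Rˣ) : R) - ((P⁻¹ : Rˣ) : R) * ((P⁻¹ : Rˣ) : R) := by
          simp [mul_sub, sub_mul, mul_assoc, Units.inv_mul_cancel_left]
  intro p
  induction p using Int.induction_on with
  | zero => simp
  | succ i ih =>
    rw [congrP (show (i:ℤ) + 1 - 1 = (i:ℤ) by ring), ← hstepup (i:ℤ)]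
    rw [mul_assoc, hup, mul_add, mul_one, ← mul_assoc, ih, add_mul, smul_mul_assoc,
      hstepup, congrP (show (i:ℤ) - 1 + 1 = (i:ℤ) by ring), add_smul, one_smul, mul_assoc]
    abel
  | pred i ih =>
    have s1 : ((P ^ (-(i:ℤ)) : Rˣ) : R) * ((P⁻¹ : Rˣ) : R) = ((P ^ (-((i:ℤ)+1)) : Rˣ) : R) := by
      rw [hstepdown, congrP (show -(i:ℤ) - 1 = -((i:ℤ)+1) by ring)]
    have s2 : ((P ^ (-((i:ℤ)+1)) : Rˣ) : R) * ((P⁻¹ : Rˣ) : R)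
        = ((P ^ (-((i:ℤ)+1) - 1) : Rˣ) : R) := hstepdown _
    rw [show -(i:ℤ) - 1 = -((i:ℤ)+1) from by ring] at ih
    rw [congrP (show -(i:ℤ) - 1 - 1 = -((i:ℤ)+1) - 1 by ring),
      congrP (show -(i:ℤ) - 1 = -((i:ℤ)+1) by ring),
      show (-(i:ℤ) - 1) = -((i:ℤ)+1) from by ring]
    rw [← s1, mul_assoc, hdown, mul_sub, ← mul_assoc, ih, add_mul, smul_mul_assoc,
      mul_assoc M, s1, s2, ← mul_assoc, s1, s2,
      show -((i:ℤ)+1) = -(i:ℤ) + (-1) from by ring, add_smul, neg_one_smul]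
    abel

lemma aux_h2 (hPM : (P : R) * M - M * (P : R) = 1) :
    ∀ (m : ℕ) (p : ℤ), ((P ^ p : Rˣ) : R) * M ^ m
      = ∑ k ∈ Finset.range (m+1),
          ((m.choose k : ℤ) * ffac p k) • (M ^ (m - k) * ((P ^ (p - (k:ℤ)) : Rˣ) : R)) := by
  have h1 := aux_h1 P M hPM
  intro m
  induction m with
  | zero => intro p; simp [ffac]
  | succ m ih =>
    intro p
    have step1 : ((P ^ p : Rˣ) : R) * M ^ (m+1)
        = ∑ k ∈ Finset.range (m+1),
            ((m.choose k : ℤ) * ffac p k) • (M ^ (m - k) * (((P ^ (p - (k:ℤ)) : Rˣ) : R) * M)) := by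
      rw [pow_succ, ← mul_assoc, ih, Finset.sum_mul]
      exact Finset.sum_congr rfl fun k _ => by rw [smul_mul_assoc, mul_assoc]
    have step2 : ∀ k ∈ Finset.range (m+1),
        ((m.choose k : ℤ) * ffac p k) • (M ^ (m - k) * (((P ^ (p - (k:ℤ)) : Rˣ) : R) * M))
        = ((m.choose k : ℤ) * ffac p k) • (M ^ (m + 1 - k) * ((P ^ (p - (k:ℤ)) : Rˣ) : R))
          + ((m.choose k : ℤ) * ffac p (k+1))
              • (M ^ (m + 1 - (k+1)) * ((P ^ (p - (((k+1):ℕ):ℤ)) : Rˣ) : R)) := by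
      intro k hk
      have hkm : k ≤ m := Nat.lt_succ_iff.mp (Finset.mem_range.mp hk)
      rw [h1 (p - (k:ℤ)), mul_add, ← mul_assoc, ← pow_succ,
        show m - k + 1 = m + 1 - k from by omega, mul_smul_comm, smul_add, smul_smul,
        show p - (k:ℤ) - 1 = p - (((k+1):ℕ):ℤ) from by push_cast; ring,
        show m - k = m + 1 - (k+1) from by omega]
      congr 1
      rw [ffac, mul_assoc]
    rw [step1, Finset.sum_congr rfl step2, Finset.sum_add_distrib]
    have key : ∀ k : ℕ, (((m+1).choose (k+1) : ℤ) * ffac p (k+1))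
          • (M ^ (m + 1 - (k+1)) * ((P ^ (p - (((k+1):ℕ):ℤ)) : Rˣ) : R))
        = ((m.choose (k+1) : ℤ) * ffac p (k+1))
            • (M ^ (m + 1 - (k+1)) * ((P ^ (p - (((k+1):ℕ):ℤ)) : Rˣ) : R))
          + ((m.choose k : ℤ) * ffac p (k+1))
              • (M ^ (m + 1 - (k+1)) * ((P ^ (p - (((k+1):ℕ):ℤ)) : Rˣ) : R)) := by
      intro k
      rw [Nat.choose_succ_succ', Nat.cast_add, add_mul, add_smul]
      abel
    rw [Finset.sum_range_succ' (fun k => (((m+1).choose k : ℤ) * ffac p k)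
        • (M ^ (m + 1 - k) * ((P ^ (p - (k:ℤ)) : Rˣ) : R))) (m+1)]
    simp only [key]
    rw [Finset.sum_add_distrib]
    have e1 : ∑ k ∈ Finset.range (m+1), ((m.choose (k+1) : ℤ) * ffac p (k+1))
          • (M ^ (m + 1 - (k+1)) * ((P ^ (p - (((k+1):ℕ):ℤ)) : Rˣ) : R))
        = ∑ k ∈ Finset.range (m+2), ((m.choose k : ℤ) * ffac p k)
          • (M ^ (m + 1 - k) * ((P ^ (p - (k:ℤ)) : Rˣ) : R))
          - ((m.choose 0 : ℤ) * ffac p 0) • (M ^ (m + 1 - 0) * ((P ^ (p - ((0:ℕ):ℤ)) : Rˣ) : R)) := by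
      rw [Finset.sum_range_succ' (fun k => ((m.choose k : ℤ) * ffac p k)
        • (M ^ (m + 1 - k) * ((P ^ (p - (k:ℤ)) : Rˣ) : R))) (m+1)]
      abel
    rw [e1, Finset.sum_range_succ (fun k => ((m.choose k : ℤ) * ffac p k)
        • (M ^ (m + 1 - k) * ((P ^ (p - (k:ℤ)) : Rˣ) : R))) (m+1)]
    simp only [Nat.choose_succ_self, Nat.cast_zero, zero_mul, zero_smul, add_zero,
      Nat.choose_zero_right, Nat.cast_one, one_mul, ffac]
    abel

lemma aux_hprod (hPM : (P : R) * M - M * (P : R) = 1) (m m' : ℕ) (p p' : ℤ) :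
    (M ^ m * ((P ^ p : Rˣ) : R)) * (M ^ m' * ((P ^ p' : Rˣ) : R))
      = ∑ k ∈ Finset.range (m'+1),
          ((m'.choose k : ℤ) * ffac p k) • (M ^ (m + m' - k) * ((P ^ (p + p' - (k:ℤ)) : Rˣ) : R)) := by
  have hPPmul : ∀ a b : ℤ, ((P ^ a : Rˣ) : R) * ((P ^ b : Rˣ) : R) = ((P ^ (a + b) : Rˣ) : R) := by
    intro a b; rw [← Units.val_mul, ← zpow_add]
  rw [mul_assoc, ← mul_assoc (((P ^ p : Rˣ) : R)), aux_h2 P M hPM m' p, Finset.sum_mul,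
    Finset.mul_sum]
  refine Finset.sum_congr rfl fun k hk => ?_
  have hk' : k ≤ m' := Nat.lt_succ_iff.mp (Finset.mem_range.mp hk)
  rw [smul_mul_assoc, mul_smul_comm, mul_assoc, hPPmul, ← mul_assoc, ← pow_add,
    show m + (m' - k) = m + m' - k from by omega,
    show p - (k:ℤ) + p' = p + p' - (k:ℤ) from by ring]

lemma aux_hext (hPM : (P : R) * M - M * (P : R) = 1) (m m' : ℕ) (p p' : ℤ)
    (N : ℕ) (hN : m' ≤ N) :
    (M ^ m * ((P ^ p : Rˣ) : R)) * (M ^ m' * ((P ^ p' : Rˣ) : R))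
      = ∑ k ∈ Finset.range (N+1),
          ((m'.choose k : ℤ) * ffac p k) • (M ^ (m + m' - k) * ((P ^ (p + p' - (k:ℤ)) : Rˣ) : R)) := by
  rw [aux_hprod P M hPM m m' p p']
  refine Finset.sum_subset (Finset.range_subset_range.mpr (by omega)) fun k hk hnk => ?_
  have : m' < k := by
    simp only [Finset.mem_range] at hk hnk; omega
  simp [Nat.choose_eq_zero_of_lt this]

lemma aux_hcomm (hPM : (P : R) * M - M * (P : R) = 1) (m m' : ℕ) (p p' : ℤ) :
    (M ^ m * ((P ^ p : Rˣ) : R)) * (M ^ m' * ((P ^ p' : Rˣ) : R))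
      - (M ^ m' * ((P ^ p' : Rˣ) : R)) * (M ^ m * ((P ^ p : Rˣ) : R))
      = ∑ k ∈ Finset.range (max m m' + 1),
          ((m'.choose k : ℤ) * ffac p k - (m.choose k : ℤ) * ffac p' k)
            • (M ^ (m + m' - k) * ((P ^ (p + p' - (k:ℤ)) : Rˣ) : R)) := by
  rw [aux_hext P M hPM m m' p p' (max m m') (le_max_right m m'),
    aux_hext P M hPM m' m p' p (max m m') (le_max_left m m'),
    Nat.add_comm m' m, show p' + p = p + p' from add_comm p' p, ← Finset.sum_sub_distrib]
  exact Finset.sum_congr rfl fun k _ => (sub_smul _ _ _).symm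

end aux

theorem stmt_15 {R : Type*} [Ring R] [Algebra ℚ R]
    (P : Rˣ) (M : R) (hPM : (P : R) * M - M * (P : R) = 1) :
    let B : ℕ → ℤ → R := fun m p => M ^ m * ((P ^ p : Rˣ) : R)
    (∀ p p' : ℤ, B 0 p * B 1 p' - B 1 p' * B 0 p = p • B 0 (p + p' - 1)) ∧
    (∀ p p' : ℤ, B 1 p * B 1 p' - B 1 p' * B 1 p = (p - p') • B 1 (p + p' - 1)) ∧
    (∀ p p' : ℤ, B 0 p * B 2 p' - B 2 p' * B 0 p
      = (p * (p - 1)) • B 0 (p + p' - 2) + (2 * p) • B 1 (p + p' - 1)) ∧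
    (∀ (m m' : ℕ) (p p' : ℤ), ∃ c : ℕ × ℤ →₀ ℤ,
      (∀ n q, c (n, q) ≠ 0 → n < m + m' ∧ |q - (p + p')| ≤ (max m m' : ℤ)) ∧
      B m p * B m' p' - B m' p' * B m p
        = c.sum fun nq k => k • B nq.1 nq.2) := by
  intro B
  refine ⟨?_, ?_, ?_, ?_⟩
  · intro p p'
    have h := aux_hcomm P M hPM 0 1 p p'
    show (M ^ 0 * ((P ^ p : Rˣ) : R)) * (M ^ 1 * ((P ^ p' : Rˣ) : R))
      - (M ^ 1 * ((P ^ p' : Rˣ) : R)) * (M ^ 0 * ((P ^ p : Rˣ) : R))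
      = p • (M ^ 0 * ((P ^ (p + p' - 1) : Rˣ) : R))
    rw [h]
    norm_num [Finset.sum_range_succ, ffac]
  · intro p p'
    have h := aux_hcomm P M hPM 1 1 p p'
    show (M ^ 1 * ((P ^ p : Rˣ) : R)) * (M ^ 1 * ((P ^ p' : Rˣ) : R))
      - (M ^ 1 * ((P ^ p' : Rˣ) : R)) * (M ^ 1 * ((P ^ p : Rˣ) : R))
      = (p - p') • (M ^ 1 * ((P ^ (p + p' - 1) : Rˣ) : R))
    rw [h]
    norm_num [Finset.sum_range_succ, ffac]
  · intro p p'
    have h := aux_hcomm P M hPM 0 2 p p'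
    show (M ^ 0 * ((P ^ p : Rˣ) : R)) * (M ^ 2 * ((P ^ p' : Rˣ) : R))
      - (M ^ 2 * ((P ^ p' : Rˣ) : R)) * (M ^ 0 * ((P ^ p : Rˣ) : R))
      = (p * (p - 1)) • (M ^ 0 * ((P ^ (p + p' - 2) : Rˣ) : R))
        + (2 * p) • (M ^ 1 * ((P ^ (p + p' - 1) : Rˣ) : R))
    rw [h]
    norm_num [Finset.sum_range_succ, ffac]
    abel
  · intro m m' p p'
    classical
    set N := max m m' with hNdef
    set d : ℕ → ℤ := fun k => (m'.choose k : ℤ) * ffac p k - (m.choose k : ℤ) * ffac p' k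
      with hddef
    refine ⟨∑ k ∈ Finset.range (N+1),
      Finsupp.single ((m + m' - k : ℕ), (p + p' - (k:ℤ))) (d k), ?_, ?_⟩
    · intro n q hne
      rw [Finsupp.finset_sum_apply] at hne
      obtain ⟨k, hk, hne'⟩ := Finset.exists_ne_zero_of_sum_ne_zero hne
      rw [Finsupp.single_apply_ne_zero] at hne'
      obtain ⟨hkey, hd⟩ := hne'
      obtain ⟨hn, hq⟩ := Prod.mk.injEq .. ▸ hkey
      have hk0 : k ≠ 0 := by
        rintro rfl
        simp [hddef, ffac] at hd
      have hkN : k ≤ N := Nat.lt_succ_iff.mp (Finset.mem_range.mp hk)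
      have hNle : N ≤ m + m' := max_le (Nat.le_add_right _ _) (Nat.le_add_left _ _)
      constructor
      · omega
      · subst hq
        rw [show p + p' - (k:ℤ) - (p + p') = -(k:ℤ) from by ring, abs_neg,
          abs_of_nonneg (by positivity : (0:ℤ) ≤ (k:ℤ)), ← Nat.cast_max]
        exact_mod_cast hkN
    · have hsum : (∑ k ∈ Finset.range (N+1),
          Finsupp.single ((m + m' - k : ℕ), (p + p' - (k:ℤ))) (d k)).sum
            (fun nq k => k • (M ^ nq.1 * ((P ^ nq.2 : Rˣ) : R)))
          = ∑ k ∈ Finset.range (N+1),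
              (d k) • (M ^ (m + m' - k) * ((P ^ (p + p' - (k:ℤ)) : Rˣ) : R)) := by
        rw [← Finsupp.sum_finset_sum_index (by intro a; simp) (by intro a b1 b2; rw [add_smul])]
        exact Finset.sum_congr rfl fun k _ => Finsupp.sum_single_index (by simp)
      exact (aux_hcomm P M hPM m m' p p').trans hsum.symm
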